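/- For fixed p ∈ (0,1/2) and g ∈ [0,1), the smallest eigenvalue λ₋(ε) = (1-gε)/2 · (1 - √(u²+v²)) of F^c(diag(1-ε,ε)) satisfies λ₋(ε) = 4p(1-p)(1-g)ε + O(ε²) as ε → 0; in particular its derivative at ε = 0 equals 4p(1-p)(1-g). -/

import Mathlib

/-- The smallest eigenvalue `λ₋(ε)` of `F^c(diag(1-ε, ε))`, with
`u = 2δ√(p(1-p))`, `v = 1-2p`, `δ = (1+ε(g-2))/(1-εg)`. -/
noncomputable def lamMinus (p g : ℝ) (ε : ℝ) : ℝ :=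
  (1 - g * ε) / 2 *
    (1 - Real.sqrt ((2 * ((1 + ε * (g - 2)) / (1 - ε * g)) *
      Real.sqrt (p * (1 - p))) ^ 2 + (1 - 2 * p) ^ 2))

theorem lamMinus_linear_order (p g : ℝ)
    (hp : p ∈ Set.Ioo (0 : ℝ) (1/2)) (hg : g ∈ Set.Ico (0 : ℝ) 1) :
    lamMinus p g 0 = 0 ∧
    HasDerivAt (lamMinus p g) (4 * p * (1 - p) * (1 - g)) 0 := by
  obtain ⟨hp0, hp2⟩ := hp
  obtain ⟨hg0, hg1⟩ := hg
  have hq : Real.sqrt (p * (1 - p)) ^ 2 = p * (1 - p) :=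
    Real.sq_sqrt (by nlinarith)
  set q := Real.sqrt (p * (1 - p)) with hqdef
  have hval : (2 * ((1 + (0:ℝ) * (g - 2)) / (1 - 0 * g)) * q) ^ 2 + (1 - 2 * p) ^ 2 = 1 := by
    have h1 : (2 * ((1 + (0:ℝ) * (g - 2)) / (1 - 0 * g)) * q) ^ 2 = 4 * q ^ 2 := by
      norm_num; ring
    rw [h1, hq]; ring
  have h1 : HasDerivAt (fun ε : ℝ => 1 + ε * (g - 2)) (g - 2) 0 := by
    simpa using ((hasDerivAt_id (0:ℝ)).mul_const (g - 2)).const_add 1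
  have h2 : HasDerivAt (fun ε : ℝ => 1 - ε * g) (-g) 0 := by
    simpa using ((hasDerivAt_id (0:ℝ)).mul_const g).const_sub 1
  have hδ := h1.div h2 (by norm_num)
  have hlin := (hδ.const_mul 2).mul_const q
  have hpow := hlin.pow 2
  have hadd := hpow.add_const ((1 - 2 * p) ^ 2)
  have hsq := hadd.sqrt (by show (2 * ((1 + (0:ℝ) * (g - 2)) / (1 - 0 * g)) * q) ^ 2 + (1 - 2 * p) ^ 2 ≠ 0; rw [hval]; norm_num)
  have hsub := hsq.const_sub 1
  have hfac : HasDerivAt (fun ε : ℝ => (1 - g * ε) / 2) (-g / 2) 0 := by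
    simpa using (((hasDerivAt_id (0:ℝ)).const_mul g).const_sub 1).div_const 2
  have hprod := hfac.mul hsub
  constructor
  · show (1 - g * 0) / 2 * (1 - Real.sqrt ((2 * ((1 + 0 * (g - 2)) / (1 - 0 * g)) * q) ^ 2 + (1 - 2 * p) ^ 2)) = 0
    rw [hval, Real.sqrt_one]; ring
  · refine hprod.congr_deriv ?_
    simp only [Pi.pow_apply, Pi.div_apply]
    rw [hval, Real.sqrt_one]
    field_simp
    simp only [Nat.cast_ofNat, Nat.add_one_sub_one, pow_one, mul_zero, zero_mul, add_zero, sub_zero, mul_one, sub_self]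
    nlinarith [hq]
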